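/- For every prime p, the group G_p is nilpotent of nilpotency class 2. -/

import Mathlib

open Filter Topology

/-- `ℤ[1/p]` as an additive subgroup of `ℚ`: rationals of the form `k / p^n`. -/
def Zp (p : ℕ) : AddSubgroup ℚ where
  carrier := {q : ℚ | ∃ (k : ℤ) (n : ℕ), q * (p : ℚ) ^ n = (k : ℚ)}
  zero_mem' := ⟨0, 0, by norm_num⟩
  add_mem' := by
    rintro a b ⟨k1, n1, h1⟩ ⟨k2, n2, h2⟩
    refine ⟨k1 * (p : ℤ) ^ n2 + k2 * (p : ℤ) ^ n1, n1 + n2, ?_⟩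
    push_cast
    calc (a + b) * (p : ℚ) ^ (n1 + n2)
        = a * (p : ℚ) ^ n1 * (p : ℚ) ^ n2 + b * (p : ℚ) ^ n2 * (p : ℚ) ^ n1 := by
          rw [pow_add]; ring
      _ = (k1 : ℚ) * (p : ℚ) ^ n2 + (k2 : ℚ) * (p : ℚ) ^ n1 := by rw [h1, h2]
  neg_mem' := by
    rintro a ⟨k, n, h⟩
    refine ⟨-k, n, ?_⟩
    push_cast
    rw [neg_mul, h]

lemma one_mem_Zp (p : ℕ) : (1 : ℚ) ∈ Zp p := ⟨1, 0, by norm_num⟩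

/-- The group `G_p = ℤ[1/p]² ⋊ ℤ`, realized as triples `(a, b, c)` with the
multiplication `(a₁,b₁,c₁)(a₂,b₂,c₂) = (a₁+a₂+c₁b₂, b₁+b₂, c₁+c₂)`. -/
abbrev Gp (p : ℕ) : Type := Zp p × Zp p × ℤ

instance Gp.instGroup (p : ℕ) : Group (Gp p) where
  mul x y := ⟨x.1 + y.1 + x.2.2 • y.2.1, x.2.1 + y.2.1, x.2.2 + y.2.2⟩
  one := ⟨0, 0, 0⟩
  inv x := ⟨-x.1 + x.2.2 • x.2.1, -x.2.1, -x.2.2⟩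
  mul_assoc x y z := by
    refine Prod.ext ?_ (Prod.ext ?_ ?_)
    · show x.1 + y.1 + x.2.2 • y.2.1 + z.1 + (x.2.2 + y.2.2) • z.2.1 =
        x.1 + (y.1 + z.1 + y.2.2 • z.2.1) + x.2.2 • (y.2.1 + z.2.1)
      rw [add_smul, smul_add]; abel
    · show x.2.1 + y.2.1 + z.2.1 = x.2.1 + (y.2.1 + z.2.1)
      rw [add_assoc]
    · show x.2.2 + y.2.2 + z.2.2 = x.2.2 + (y.2.2 + z.2.2)
      rw [add_assoc]
  one_mul x := by
    refine Prod.ext ?_ (Prod.ext ?_ ?_)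
    · show 0 + x.1 + (0 : ℤ) • x.2.1 = x.1
      simp
    · show 0 + x.2.1 = x.2.1
      simp
    · show 0 + x.2.2 = x.2.2
      simp
  mul_one x := by
    refine Prod.ext ?_ (Prod.ext ?_ ?_)
    · show x.1 + 0 + x.2.2 • (0 : Zp p) = x.1
      simp
    · show x.2.1 + 0 = x.2.1
      simp
    · show x.2.2 + 0 = x.2.2
      simp
  inv_mul_cancel x := by
    refine Prod.ext ?_ (Prod.ext ?_ ?_)
    · show -x.1 + x.2.2 • x.2.1 + x.1 + (-x.2.2) • x.2.1 = 0
      rw [neg_smul]; abel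
    · show -x.2.1 + x.2.1 = 0
      simp
    · show -x.2.2 + x.2.2 = 0
      simp

/-- `G_p` is nilpotent of nilpotency class exactly 2. -/
theorem Gp_nilpotent_class_two (p : ℕ) (hp : p.Prime) :
    upperCentralSeries (Gp p) 2 = ⊤ ∧ upperCentralSeries (Gp p) 1 ≠ ⊤ := by

  have mul_def : ∀ x y : Gp p, x * y =
      (x.1 + y.1 + x.2.2 • y.2.1, x.2.1 + y.2.1, x.2.2 + y.2.2) := fun _ _ => rfl
  have inv_def : ∀ x : Gp p, x⁻¹ = (-x.1 + x.2.2 • x.2.1, -x.2.1, -x.2.2) := fun _ => rfl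
  have hcen : ∀ z : Gp p, z.2.1 = 0 → z.2.2 = 0 → z ∈ Subgroup.center (Gp p) := by
    intro z h2 h3
    rw [Subgroup.mem_center_iff]
    intro g
    rw [mul_def, mul_def]
    refine Prod.ext ?_ (Prod.ext ?_ ?_)
    · show g.1 + z.1 + g.2.2 • z.2.1 = z.1 + g.1 + z.2.2 • g.2.1
      rw [h2, h3, smul_zero, zero_smul]; abel
    · show g.2.1 + z.2.1 = z.2.1 + g.2.1
      abel
    · show g.2.2 + z.2.2 = z.2.2 + g.2.2
      abel
  constructor
  · rw [eq_top_iff]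
    intro x _
    show x ∈ Subgroup.upperCentralSeries (Gp p) 2
    rw [mem_upperCentralSeries_succ_iff]
    intro y
    rw [upperCentralSeries_one]
    apply hcen
    · show x.2.1 + y.2.1 + -x.2.1 + -y.2.1 = 0
      abel
    · show x.2.2 + y.2.2 + -x.2.2 + -y.2.2 = 0
      abel
  · show Subgroup.upperCentralSeries (Gp p) 1 ≠ ⊤
    rw [upperCentralSeries_one]
    intro h
    have h1 : ((0, ⟨1, one_mem_Zp p⟩, 0) : Gp p) ∈ Subgroup.center (Gp p) := h ▸ trivial
    rw [Subgroup.mem_center_iff] at h1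
    have := h1 ((0, 0, 1) : Gp p)
    have h2 := congrArg (fun z : Gp p => (z.1 : ℚ)) this
    simp only [mul_def] at h2
    norm_num at h2
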